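/- arXiv:2403.08532 — 6 statements merged into one kernel-verified Lean document; each statement's English description precedes it below -/
import Mathlib

section
/- Let γ, β, τ₀, τ_ε, τ_S > 0, and for θ > -1 let a(θ) be the unique positive solution of γa = τ_ε/(τ_ε + τ₀ + β²a²(θ+1)²τ_S). Then the function a(θ) is strictly decreasing in θ. -/
open Set

/-- The equilibrium coefficient a(θ), defined as the unique positive solution of
γa = τε/(τε + τ₀ + β²a²(θ+1)²τS), is strictly decreasing in θ on (-1, ∞). -/
theorem a_strictAnti
    (γ β τ₀ τε τS : ℝ)
    (hγ : 0 < γ) (hβ : 0 < β) (hτ₀ : 0 < τ₀) (hτε : 0 < τε) (hτS : 0 < τS)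
    (a : ℝ → ℝ)
    (ha : ∀ θ : ℝ, -1 < θ → 0 < a θ ∧
      γ * a θ = τε / (τε + τ₀ + β ^ 2 * (a θ) ^ 2 * (θ + 1) ^ 2 * τS)) :
    StrictAntiOn a (Set.Ioi (-1 : ℝ)) := by
  intro x hx y hy hxy
  simp only [mem_Ioi] at hx hy
  obtain ⟨hax, hex⟩ := ha x hx
  obtain ⟨hay, hey⟩ := ha y hy
  have hDx : 0 < τε + τ₀ + β ^ 2 * (a x) ^ 2 * (x + 1) ^ 2 * τS := by positivity
  have hDy : 0 < τε + τ₀ + β ^ 2 * (a y) ^ 2 * (y + 1) ^ 2 * τS := by positivity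
  rw [eq_div_iff hDx.ne'] at hex
  rw [eq_div_iff hDy.ne'] at hey
  by_contra h
  push_neg at h
  have hx1 : 0 < x + 1 := by linarith
  have hy1 : 0 < y + 1 := by linarith
  have hsq : (x + 1) ^ 2 < (y + 1) ^ 2 := by nlinarith
  have hasq : (a x) ^ 2 ≤ (a y) ^ 2 := by nlinarith
  have hD : τε + τ₀ + β ^ 2 * (a x) ^ 2 * (x + 1) ^ 2 * τS <
      τε + τ₀ + β ^ 2 * (a y) ^ 2 * (y + 1) ^ 2 * τS := by
    have : β ^ 2 * (a x) ^ 2 * (x + 1) ^ 2 * τS < β ^ 2 * (a y) ^ 2 * (y + 1) ^ 2 * τS := by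
      have hp : (a x) ^ 2 * (x + 1) ^ 2 < (a y) ^ 2 * (y + 1) ^ 2 := by
        calc (a x) ^ 2 * (x + 1) ^ 2 ≤ (a y) ^ 2 * (x + 1) ^ 2 := by
              exact mul_le_mul_of_nonneg_right hasq (by positivity)
          _ < (a y) ^ 2 * (y + 1) ^ 2 := by
              exact mul_lt_mul_of_pos_left hsq (by positivity)
      calc β ^ 2 * (a x) ^ 2 * (x + 1) ^ 2 * τS = β ^ 2 * ((a x) ^ 2 * (x + 1) ^ 2) * τS := by
            ring
        _ < β ^ 2 * ((a y) ^ 2 * (y + 1) ^ 2) * τS := by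
            exact mul_lt_mul_of_pos_right (mul_lt_mul_of_pos_left hp (by positivity)) hτS
        _ = β ^ 2 * (a y) ^ 2 * (y + 1) ^ 2 * τS := by ring
    linarith
  have h1 : γ * a x * (τε + τ₀ + β ^ 2 * (a x) ^ 2 * (x + 1) ^ 2 * τS) ≤
      γ * a y * (τε + τ₀ + β ^ 2 * (a x) ^ 2 * (x + 1) ^ 2 * τS) := by nlinarith
  have h2 : γ * a y * (τε + τ₀ + β ^ 2 * (a x) ^ 2 * (x + 1) ^ 2 * τS) <
      γ * a y * (τε + τ₀ + β ^ 2 * (a y) ^ 2 * (y + 1) ^ 2 * τS) := by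
    exact mul_lt_mul_of_pos_left hD (by positivity)
  linarith
end

section
/- Let γ, β, τ₀, τ_ε, τ_S > 0, and for θ > -1 let a(θ) be the unique positive solution of γa = τ_ε/(τ_ε + τ₀ + β²a²(θ+1)²τ_S). Then the loading on private information α(θ) := a(θ)(θ+1) is strictly increasing in θ. -/
open Set

lemma key_eq (γ β τ₀ τε τS : ℝ)
    (hγ : 0 < γ) (hτ₀ : 0 < τ₀) (hτε : 0 < τε) (hτS : 0 < τS)
    (A θ : ℝ) (hA : 0 < A)
    (heq : γ * A = τε / (τε + τ₀ + β ^ 2 * A ^ 2 * (θ + 1) ^ 2 * τS)) :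
    γ * (A * (θ + 1)) * (τε + τ₀ + β ^ 2 * (A * (θ + 1)) ^ 2 * τS)
      = τε * (θ + 1) := by
  have hD : 0 < τε + τ₀ + β ^ 2 * A ^ 2 * (θ + 1) ^ 2 * τS := by positivity
  have h1 : γ * A * (τε + τ₀ + β ^ 2 * A ^ 2 * (θ + 1) ^ 2 * τS) = τε := by
    field_simp at heq; linarith
  linear_combination (θ + 1) * h1

/-- The loading on private information α(θ) = a(θ)(θ+1) is strictly increasing
in θ on (-1, ∞), where a(θ) is the unique positive solution of the fixed-point
equation. -/
theorem alpha_strictMono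
    (γ β τ₀ τε τS : ℝ)
    (hγ : 0 < γ) (hβ : 0 < β) (hτ₀ : 0 < τ₀) (hτε : 0 < τε) (hτS : 0 < τS)
    (a : ℝ → ℝ)
    (ha : ∀ θ : ℝ, -1 < θ → 0 < a θ ∧
      γ * a θ = τε / (τε + τ₀ + β ^ 2 * (a θ) ^ 2 * (θ + 1) ^ 2 * τS)) :
    StrictMonoOn (fun θ => a θ * (θ + 1)) (Set.Ioi (-1 : ℝ)) := by
  intro x hx y hy hxy
  simp only [mem_Ioi] at hx hy
  obtain ⟨hax, heqx⟩ := ha x hx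
  obtain ⟨hay, heqy⟩ := ha y hy
  have hx1 : 0 < x + 1 := by linarith
  have hy1 : 0 < y + 1 := by linarith
  set α₁ := a x * (x + 1) with hα₁
  set α₂ := a y * (y + 1) with hα₂
  have hk1 := key_eq γ β τ₀ τε τS hγ hτ₀ hτε hτS (a x) x hax heqx
  have hk2 := key_eq γ β τ₀ τε τS hγ hτ₀ hτε hτS (a y) y hay heqy
  have hp1 : 0 < α₁ := mul_pos hax hx1
  have hp2 : 0 < α₂ := mul_pos hay hy1
  by_contra h
  push_neg at h
  have hle : α₂ ≤ α₁ := h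
  have hlt : τε * (x + 1) < τε * (y + 1) := by
    apply mul_lt_mul_of_pos_left _ hτε; linarith
  rw [← hα₁] at hk1
  rw [← hα₂] at hk2
  have hs : 0 ≤ α₁ - α₂ := by linarith
  have h3 : α₂ ^ 3 ≤ α₁ ^ 3 := pow_le_pow_left₀ hp2.le hle 3
  have hmono : γ * α₂ * (τε + τ₀ + β ^ 2 * α₂ ^ 2 * τS)
      ≤ γ * α₁ * (τε + τ₀ + β ^ 2 * α₁ ^ 2 * τS) := by
    nlinarith [mul_nonneg (mul_nonneg hγ.le (by positivity : (0:ℝ) ≤ τε + τ₀)) hs,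
      mul_nonneg (mul_nonneg (mul_nonneg hγ.le (sq_nonneg β)) hτS.le) (sub_nonneg.2 h3)]
  linarith
end

section
/- With a(θ) the unique positive solution of γa = τ_ε/(τ_ε + τ₀ + β²a²(θ+1)²τ_S), the price variance Var(p) = (1/(γ+β)²)(β²(θ+1)²/τ₀ + 1/(a(θ)²τ_S)) is strictly increasing in θ on (-1,∞). -/
open Set

/-- The price variance Var(p) = (1/(γ+β)²)(β²(θ+1)²/τ₀ + 1/(a(θ)²τS)) is
strictly increasing in θ on (-1, ∞). -/
theorem price_variance_strictMono
    (γ β τ₀ τε τS : ℝ)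
    (hγ : 0 < γ) (hβ : 0 < β) (hτ₀ : 0 < τ₀) (hτε : 0 < τε) (hτS : 0 < τS)
    (a : ℝ → ℝ)
    (ha : ∀ θ : ℝ, -1 < θ → 0 < a θ ∧
      γ * a θ = τε / (τε + τ₀ + β ^ 2 * (a θ) ^ 2 * (θ + 1) ^ 2 * τS)) :
    StrictMonoOn
      (fun θ => (1 / (γ + β) ^ 2) * (β ^ 2 * (θ + 1) ^ 2 / τ₀ + 1 / ((a θ) ^ 2 * τS)))
      (Set.Ioi (-1 : ℝ)) := by
  intro x hx y hy hxy
  obtain ⟨hax, heqx⟩ := ha x hx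
  obtain ⟨hay, heqy⟩ := ha y hy
  have hx1 : (0:ℝ) < x + 1 := by have := mem_Ioi.mp hx; linarith
  have hy1 : (0:ℝ) < y + 1 := by have := mem_Ioi.mp hy; linarith
  -- a is (weakly) decreasing
  have hle : a y ≤ a x := by
    by_contra h
    push_neg at h
    have hDx : (0:ℝ) < τε + τ₀ + β ^ 2 * (a x) ^ 2 * (x + 1) ^ 2 * τS := by positivity
    have hD : τε + τ₀ + β ^ 2 * (a x) ^ 2 * (x + 1) ^ 2 * τS
        < τε + τ₀ + β ^ 2 * (a y) ^ 2 * (y + 1) ^ 2 * τS := by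
      have hp1 : a x * (x + 1) < a y * (y + 1) := by nlinarith
      have h1 : (a x) ^ 2 * (x + 1) ^ 2 < (a y) ^ 2 * (y + 1) ^ 2 := by
        nlinarith [mul_pos hax hx1, mul_pos hay hy1]
      nlinarith [sq_nonneg β, mul_pos (pow_pos hβ 2) hτS]
    have hlt : τε / (τε + τ₀ + β ^ 2 * (a y) ^ 2 * (y + 1) ^ 2 * τS)
        < τε / (τε + τ₀ + β ^ 2 * (a x) ^ 2 * (x + 1) ^ 2 * τS) :=
      div_lt_div_of_pos_left hτε hDx hD
    nlinarith [mul_lt_mul_of_pos_left h hγ]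
  simp only
  have h1 : β ^ 2 * (x + 1) ^ 2 / τ₀ < β ^ 2 * (y + 1) ^ 2 / τ₀ := by
    apply div_lt_div_of_pos_right ?_ hτ₀
    have h0 : (x + 1) ^ 2 < (y + 1) ^ 2 := by nlinarith
    exact mul_lt_mul_of_pos_left h0 (pow_pos hβ 2)
  have h2 : 1 / ((a x) ^ 2 * τS) ≤ 1 / ((a y) ^ 2 * τS) := by
    apply one_div_le_one_div_of_le (by positivity)
    have h0 : (a y) ^ 2 ≤ (a x) ^ 2 := by nlinarith
    exact mul_le_mul_of_nonneg_right h0 hτS.le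
  have hp : (0:ℝ) < 1 / (γ + β) ^ 2 := by positivity
  exact mul_lt_mul_of_pos_left (add_lt_add_of_lt_of_le h1 h2) hp
end

section
/- The map θ ↦ (θ+1)/γ - α(θ), the equilibrium loading on public information, is strictly increasing on (-1,∞), tends to 0 as θ → -1⁺ and to ∞ as θ → ∞; hence for any target value η^T > 0 there is a unique θ'' with (θ''+1)/γ - α(θ'') = η^T. -/
open Set Filter Topology

/-- The equilibrium loading on public information η(θ) = (θ+1)/γ - α(θ) is strictly
increasing on (-1,∞), tends to 0 as θ → -1⁺ and to ∞ as θ → ∞; hence for any ηᵀ > 0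
there is a unique θ'' with η(θ'') = ηᵀ. -/
theorem public_loading_properties
    (γ β τ₀ τε τS : ℝ)
    (hγ : 0 < γ) (hβ : 0 < β) (hτ₀ : 0 < τ₀) (hτε : 0 < τε) (hτS : 0 < τS)
    (a : ℝ → ℝ)
    (ha : ∀ θ : ℝ, -1 < θ → 0 < a θ ∧
      γ * a θ = τε / (τε + τ₀ + β ^ 2 * (a θ) ^ 2 * (θ + 1) ^ 2 * τS)) :
    StrictMonoOn (fun θ => (θ + 1) / γ - a θ * (θ + 1)) (Set.Ioi (-1 : ℝ)) ∧
    Tendsto (fun θ => (θ + 1) / γ - a θ * (θ + 1)) (𝓝[>] (-1 : ℝ)) (𝓝 0) ∧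
    Tendsto (fun θ => (θ + 1) / γ - a θ * (θ + 1)) atTop atTop ∧
    ∀ ηT : ℝ, 0 < ηT →
      ∃! θ : ℝ, θ ∈ Set.Ioi (-1 : ℝ) ∧ (θ + 1) / γ - a θ * (θ + 1) = ηT := by
  -- polynomial form of the fixed-point equation
  have haP : ∀ θ : ℝ, -1 < θ →
      γ * a θ * (τε + τ₀ + β ^ 2 * (a θ) ^ 2 * (θ + 1) ^ 2 * τS) = τε := by
    intro θ hθ
    have h := (ha θ hθ).2
    have hD : (0:ℝ) < τε + τ₀ + β ^ 2 * (a θ) ^ 2 * (θ + 1) ^ 2 * τS := by positivity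
    rw [eq_div_iff hD.ne'] at h
    exact h
  have hlt : ∀ θ : ℝ, -1 < θ → γ * a θ < 1 := by
    intro θ hθ
    have h := haP θ hθ
    have hp := (ha θ hθ).1
    have h1 : (0:ℝ) ≤ β ^ 2 * (a θ) ^ 2 * (θ + 1) ^ 2 * τS := by positivity
    nlinarith [mul_pos hγ hp]
  -- a is strictly decreasing
  have hanti : ∀ θ₁ θ₂ : ℝ, -1 < θ₁ → θ₁ < θ₂ → a θ₂ < a θ₁ := by
    intro θ₁ θ₂ h1 h12
    by_contra h
    push_neg at h
    have h2 : -1 < θ₂ := by linarith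
    have e1 := haP θ₁ h1
    have e2 := haP θ₂ h2
    have p1 := (ha θ₁ h1).1
    have p2 := (ha θ₂ h2).1
    have hs1 : (0:ℝ) < θ₁ + 1 := by linarith
    have hs2 : (0:ℝ) < θ₂ + 1 := by linarith
    have k1 : a θ₁ ^ 3 * (θ₁ + 1) ^ 2 < a θ₂ ^ 3 * (θ₂ + 1) ^ 2 := by
      have h3 : a θ₁ ^ 3 ≤ a θ₂ ^ 3 := pow_le_pow_left₀ p1.le h 3
      have hsq : (θ₁ + 1) ^ 2 < (θ₂ + 1) ^ 2 := by nlinarith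
      have k2 : a θ₁ ^ 3 * (θ₁ + 1) ^ 2 < a θ₁ ^ 3 * (θ₂ + 1) ^ 2 :=
        mul_lt_mul_of_pos_left hsq (by positivity)
      have k3 : a θ₁ ^ 3 * (θ₂ + 1) ^ 2 ≤ a θ₂ ^ 3 * (θ₂ + 1) ^ 2 :=
        mul_le_mul_of_nonneg_right h3 (by positivity)
      linarith
    nlinarith [mul_lt_mul_of_pos_left k1 (show (0:ℝ) < γ * β ^ 2 * τS by positivity),
      mul_le_mul_of_nonneg_left h (le_of_lt (mul_pos hγ (show (0:ℝ) < τε + τ₀ by linarith)))]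
  -- rewrite f
  have e : ∀ θ : ℝ, (θ + 1) / γ - a θ * (θ + 1) = (θ + 1) * (1 - γ * a θ) / γ := by
    intro θ; field_simp
  have hmono : StrictMonoOn (fun θ => (θ + 1) / γ - a θ * (θ + 1)) (Set.Ioi (-1 : ℝ)) := by
    intro θ₁ h1 θ₂ h2 h12
    simp only [mem_Ioi] at h1 h2
    have hA := hanti θ₁ θ₂ h1 h12
    have l1 := hlt θ₁ h1
    have hs1 : (0:ℝ) < θ₁ + 1 := by linarith
    simp only
    rw [e θ₁, e θ₂]
    have c1 : 0 < 1 - γ * a θ₁ := by linarith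
    have c2 : γ * a θ₂ < γ * a θ₁ := mul_lt_mul_of_pos_left hA hγ
    exact div_lt_div_of_pos_right (by nlinarith [mul_pos hs1 c1]) hγ
  refine ⟨hmono, ?_, ?_, ?_⟩
  · -- tendsto 0 at -1⁺
    apply tendsto_of_tendsto_of_tendsto_of_le_of_le'
      (tendsto_const_nhds : Tendsto (fun _ : ℝ => (0:ℝ)) (𝓝[>] (-1:ℝ)) (𝓝 0))
      (show Tendsto (fun θ : ℝ => (θ + 1) / γ) (𝓝[>] (-1:ℝ)) (𝓝 0) from ?_)
    · filter_upwards [self_mem_nhdsWithin] with θ hθ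
      simp only [mem_Ioi] at hθ
      have hs : (0:ℝ) < θ + 1 := by linarith
      have l := hlt θ hθ
      rw [e θ]
      exact div_nonneg (mul_nonneg hs.le (by linarith)) hγ.le
    · filter_upwards [self_mem_nhdsWithin] with θ hθ
      simp only [mem_Ioi] at hθ
      have hs : (0:ℝ) < θ + 1 := by linarith
      have hp := (ha θ hθ).1
      have : 0 ≤ a θ * (θ + 1) := by positivity
      linarith
    · have hc : Tendsto (fun θ : ℝ => (θ + 1) / γ) (𝓝 (-1:ℝ)) (𝓝 0) := by
        have hcc : Continuous (fun θ : ℝ => (θ + 1) / γ) := by fun_prop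
        have := hcc.tendsto (-1:ℝ)
        simpa using this
      exact hc.mono_left nhdsWithin_le_nhds
  · -- tendsto atTop
    have h00 : (-1:ℝ) < 0 := by norm_num
    have hc0 : 0 < (1 - γ * a 0) / γ := by
      have := hlt 0 h00
      exact div_pos (by linarith) hγ
    apply tendsto_atTop_mono' atTop
      (show ∀ᶠ θ in atTop, (1 - γ * a 0) / γ * (θ + 1) ≤ (θ + 1) / γ - a θ * (θ + 1) from ?_)
    · exact (tendsto_atTop_add_const_right atTop 1 tendsto_id).const_mul_atTop hc0
    · filter_upwards [eventually_ge_atTop (0:ℝ)] with θ hθ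
      have hθ1 : (-1:ℝ) < θ := by linarith
      have haa : a θ ≤ a 0 := by
        rcases eq_or_lt_of_le hθ with h | h
        · rw [← h]
        · exact (hanti 0 θ h00 h).le
      have l := hlt θ hθ1
      have hs : (0:ℝ) < θ + 1 := by linarith
      rw [e θ]
      rw [div_mul_eq_mul_div, div_le_div_iff_of_pos_right hγ]
      nlinarith [mul_nonneg hs.le (mul_nonneg hγ.le (sub_nonneg.mpr haa))]
  · -- existence and uniqueness
    intro ηT hη
    have hT : (0:ℝ) < τε + τ₀ := by linarith
    set A : ℝ := τε / (γ * (τε + τ₀)) with hAdef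
    have hA0 : 0 < A := by rw [hAdef]; positivity
    have hγA : γ * A * (τε + τ₀) = τε := by
      rw [hAdef]; field_simp
    set S : ℝ → ℝ :=
      fun x => Real.sqrt ((τε - γ * x * (τε + τ₀)) / (γ * β ^ 2 * τS * x ^ 3)) with hSdef
    set F : ℝ → ℝ := fun x => S x * (1 - γ * x) / γ with hFdef
    have hNpos : ∀ x ∈ Ioo (0:ℝ) A, 0 < τε - γ * x * (τε + τ₀) := by
      rintro x ⟨hx0, hxA⟩
      have h1 : γ * x * (τε + τ₀) < γ * A * (τε + τ₀) :=
        mul_lt_mul_of_pos_right (mul_lt_mul_of_pos_left hxA hγ) hT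
      linarith
    have hDpos : ∀ x ∈ Ioo (0:ℝ) A, 0 < γ * β ^ 2 * τS * x ^ 3 := by
      rintro x ⟨hx0, _⟩; positivity
    have hSpos : ∀ x ∈ Ioo (0:ℝ) A, 0 < S x := by
      intro x hx
      exact Real.sqrt_pos.mpr (div_pos (hNpos x hx) (hDpos x hx))
    have hkey : ∀ x ∈ Ioo (0:ℝ) A,
        γ * x * (τε + τ₀ + β ^ 2 * x ^ 2 * (S x) ^ 2 * τS) = τε := by
      intro x hx
      have h2 : (S x) ^ 2 = (τε - γ * x * (τε + τ₀)) / (γ * β ^ 2 * τS * x ^ 3) :=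
        Real.sq_sqrt (div_pos (hNpos x hx) (hDpos x hx)).le
      rw [h2]
      have hD := (hDpos x hx).ne'
      have hx0 : x ≠ 0 := hx.1.ne'
      field_simp
      ring
    have huniq : ∀ s x y : ℝ, 0 < x → 0 < y →
        γ * x * (τε + τ₀ + β ^ 2 * x ^ 2 * s ^ 2 * τS) = τε →
        γ * y * (τε + τ₀ + β ^ 2 * y ^ 2 * s ^ 2 * τS) = τε → x = y := by
      intro s x y hx hy ex ey
      have hz : (x - y) * (γ * (τε + τ₀) + γ * β ^ 2 * τS * s ^ 2 * (x ^ 2 + x * y + y ^ 2)) = 0 := by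
        linear_combination ex - ey
      have hpos : 0 < γ * (τε + τ₀) + γ * β ^ 2 * τS * s ^ 2 * (x ^ 2 + x * y + y ^ 2) := by
        have h1 : 0 ≤ γ * β ^ 2 * τS * s ^ 2 * (x ^ 2 + x * y + y ^ 2) := by positivity
        nlinarith [mul_pos hγ hT]
      rcases mul_eq_zero.mp hz with h | h
      · linarith
      · exact absurd h hpos.ne'
    have hFc : ContinuousOn F (Ioo (0:ℝ) A) := by
      apply ContinuousOn.div_const
      apply ContinuousOn.mul
      · exact Real.continuous_sqrt.comp_continuousOn
          (ContinuousOn.div (by fun_prop) (by fun_prop) (fun x hx => (hDpos x hx).ne'))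
      · fun_prop
    -- a point where F is below ηT (near A)
    have hx1 : ∃ x₁ ∈ Ioo (0:ℝ) A, F x₁ < ηT := by
      have hDA : (γ * β ^ 2 * τS * A ^ 3) ≠ 0 := by positivity
      have hcA : ContinuousAt F A := by
        apply ContinuousAt.div_const
        apply ContinuousAt.mul
        · exact Real.continuous_sqrt.continuousAt.comp
            (ContinuousAt.div (by fun_prop) (by fun_prop) hDA)
        · fun_prop
      have hFA : F A = 0 := by
        have h0 : τε - γ * A * (τε + τ₀) = 0 := by linarith
        simp [hFdef, hSdef, h0]
      have ht : Tendsto F (𝓝[<] A) (𝓝 0) := by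
        have := hcA.tendsto.mono_left (nhdsWithin_le_nhds (s := Iio A))
        rwa [hFA] at this
      have h1 : ∀ᶠ x in 𝓝[<] A, F x < ηT := ht.eventually_lt_const hη
      have h2 : ∀ᶠ x in 𝓝[<] A, 0 < x :=
        (eventually_gt_nhds hA0).filter_mono nhdsWithin_le_nhds
      have h3 : ∀ᶠ x in 𝓝[<] A, x < A := by
        filter_upwards [self_mem_nhdsWithin] with x hx; exact hx
      obtain ⟨x₁, hF1, hx0, hxA⟩ := (h1.and (h2.and h3)).exists
      exact ⟨x₁, ⟨hx0, hxA⟩, hF1⟩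
    -- a point where F is above ηT (near 0)
    have hx2 : ∃ x₂ ∈ Ioo (0:ℝ) A, ηT < F x₂ := by
      have hDten : Tendsto (fun x : ℝ => γ * β ^ 2 * τS * x ^ 3) (𝓝[>] 0) (𝓝[>] 0) := by
        apply tendsto_nhdsWithin_of_tendsto_nhds_of_eventually_within
        · have hcc : Continuous (fun x : ℝ => γ * β ^ 2 * τS * x ^ 3) := by fun_prop
          simpa using hcc.tendsto 0 |>.mono_left nhdsWithin_le_nhds
        · filter_upwards [self_mem_nhdsWithin] with x hx
          have hx' : (0:ℝ) < x := hx
          exact mem_Ioi.mpr (by positivity)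
      have hinv : Tendsto (fun x : ℝ => (γ * β ^ 2 * τS * x ^ 3)⁻¹) (𝓝[>] 0) atTop :=
        tendsto_inv_nhdsGT_zero.comp hDten
      have hN : Tendsto (fun x : ℝ => τε - γ * x * (τε + τ₀)) (𝓝[>] 0) (𝓝 τε) := by
        have hcc : Continuous (fun x : ℝ => τε - γ * x * (τε + τ₀)) := by fun_prop
        simpa using hcc.tendsto 0 |>.mono_left nhdsWithin_le_nhds
      have hq : Tendsto (fun x : ℝ => (τε - γ * x * (τε + τ₀)) / (γ * β ^ 2 * τS * x ^ 3))
          (𝓝[>] 0) atTop := by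
        simp only [div_eq_mul_inv]
        exact hN.pos_mul_atTop hτε hinv
      have hsqrtT : Tendsto Real.sqrt atTop atTop := by
        apply tendsto_atTop_atTop.mpr
        intro b
        refine ⟨b ^ 2, fun x hx => ?_⟩
        calc b ≤ |b| := le_abs_self b
          _ = Real.sqrt (b ^ 2) := (Real.sqrt_sq_eq_abs b).symm
          _ ≤ Real.sqrt x := Real.sqrt_le_sqrt hx
      have hSt : Tendsto S (𝓝[>] 0) atTop := by
        rw [hSdef]
        exact hsqrtT.comp hq
      have hlin : Tendsto (fun x : ℝ => (1 - γ * x) / γ) (𝓝[>] 0) (𝓝 (1 / γ)) := by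
        have hcc : Continuous (fun x : ℝ => (1 - γ * x) / γ) := by fun_prop
        simpa using hcc.tendsto 0 |>.mono_left nhdsWithin_le_nhds
      have hFt : Tendsto F (𝓝[>] 0) atTop := by
        have := hSt.atTop_mul_pos (by positivity : (0:ℝ) < 1 / γ) hlin
        simpa [hFdef, mul_div_assoc] using this
      have h1 : ∀ᶠ x in 𝓝[>] 0, ηT < F x := hFt.eventually_gt_atTop ηT
      have h2 : ∀ᶠ x in 𝓝[>] (0:ℝ), x < A :=
        (eventually_lt_nhds hA0).filter_mono nhdsWithin_le_nhds
      have h3 : ∀ᶠ x in 𝓝[>] (0:ℝ), 0 < x := by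
        filter_upwards [self_mem_nhdsWithin] with x hx; exact hx
      obtain ⟨x₂, hF2, hxA, hx0⟩ := (h1.and (h2.and h3)).exists
      exact ⟨x₂, ⟨hx0, hxA⟩, hF2⟩
    obtain ⟨x₁, hx₁, hF1⟩ := hx1
    obtain ⟨x₂, hx₂, hF2⟩ := hx2
    have hsub : uIcc x₁ x₂ ⊆ Ioo (0:ℝ) A := (Set.ordConnected_Ioo).uIcc_subset hx₁ hx₂
    obtain ⟨x, hxu, hFx⟩ := intermediate_value_uIcc (hFc.mono hsub) (Icc_subset_uIcc ⟨hF1.le, hF2.le⟩)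
    have hxI : x ∈ Ioo (0:ℝ) A := hsub hxu
    have hSx := hSpos x hxI
    have hθmem : S x - 1 ∈ Ioi (-1:ℝ) := by simp only [mem_Ioi]; linarith
    have hθ : (-1:ℝ) < S x - 1 := hθmem
    have hs1 : S x - 1 + 1 = S x := by ring
    have heqa : a (S x - 1) = x := by
      apply huniq (S x) _ _ (ha _ hθ).1 hxI.1 _ (hkey x hxI)
      have := haP _ hθ
      rwa [hs1] at this
    have hval : (S x - 1 + 1) / γ - a (S x - 1) * (S x - 1 + 1) = ηT := by
      rw [heqa, hs1, ← hFx, hFdef]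
      field_simp
    refine ⟨S x - 1, ⟨hθmem, hval⟩, ?_⟩
    rintro θ' ⟨hθ'mem, hθ'eq⟩
    exact hmono.injOn hθ'mem hθmem
      (show (θ' + 1) / γ - a θ' * (θ' + 1)
          = (S x - 1 + 1) / γ - a (S x - 1) * (S x - 1 + 1) by rw [hθ'eq, hval])
end

section
/- Fix θ > -1 and parameters γ, β, τ₀, τ_ε, τ_S > 0. For δ > -γ with β + δ > 0, let a(δ) be the unique positive solution of (γ+δ)a = τ_ε/(τ_ε + τ₀ + a²(θ+1)²(β+δ)²τ_S), and set α(δ) = a(δ)(θ+1). Then dα/dδ = -α·(α²(β+δ)τ_S(β + 2(γ+δ) + δ) + τ₀ + τ_ε)/((γ+δ)(3α²(β+δ)²τ_S + τ₀ + τ_ε)) < 0, so α is strictly decreasing in the tax δ. -/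
open Set


lemma cube_root_cube {t : ℝ} (ht : 0 < t) :
    0 < t ^ ((1:ℝ)/3) ∧ (t ^ ((1:ℝ)/3)) ^ 3 = t := by
  refine ⟨Real.rpow_pos_of_pos ht _, ?_⟩
  rw [← Real.rpow_natCast (t ^ ((1:ℝ)/3)) 3, ← Real.rpow_mul ht.le]
  norm_num

lemma cardano (A B u : ℝ) (hA : 0 < A) (hB : 0 < B) (hu : 0 < u)
    (hu3 : u ^ 3 = A + Real.sqrt (A^2 + B^3)) :
    0 < u - B/u ∧ (u - B/u)^3 + 3*B*(u - B/u) = 2*A := by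
  have hs2 : Real.sqrt (A^2 + B^3) ^ 2 = A^2 + B^3 := Real.sq_sqrt (by positivity)
  have hune : u ≠ 0 := hu.ne'
  have hBu : B^3 / u^3 = Real.sqrt (A^2 + B^3) - A := by
    rw [div_eq_iff (pow_ne_zero 3 hune)]
    linear_combination (-(Real.sqrt (A^2+B^3) - A)) * hu3 - hs2
  constructor
  · have h1 : Real.sqrt B ^ 3 = Real.sqrt (B^3) := by
      rw [show B^3 = B^2 * B by ring, Real.sqrt_mul (by positivity), Real.sqrt_sq hB.le,
        pow_succ, sq, Real.mul_self_sqrt hB.le]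
    have hsB : Real.sqrt B ^ 3 ≤ Real.sqrt (A^2 + B^3) := by
      rw [h1]; exact Real.sqrt_le_sqrt (by nlinarith)
    have husB : Real.sqrt B < u := by
      by_contra h
      push_neg at h
      have h3 : u ^ 3 ≤ Real.sqrt B ^ 3 := pow_le_pow_left₀ hu.le h 3
      linarith
    have hu2 : B < u^2 := by
      nlinarith [Real.sqrt_nonneg B, Real.sq_sqrt hB.le]
    have : B/u < u := by
      rw [div_lt_iff₀ hu]; nlinarith
    linarith
  · have key : (u - B/u)^3 + 3*B*(u - B/u) = u^3 - B^3/u^3 := by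
      field_simp
      ring
    rw [key, hBu, hu3]
    ring

lemma cubic_inj {m n x y : ℝ} (hm : 0 < m) (hn : 0 < n)
    (h : m*x + n*x^3 = m*y + n*y^3) : x = y := by
  rcases lt_trichotomy x y with hlt | he | hgt
  · exfalso
    nlinarith [mul_nonneg (mul_nonneg hn.le (sub_pos.mpr hlt).le) (sq_nonneg (x+y)),
      mul_nonneg (mul_nonneg hn.le (sub_pos.mpr hlt).le) (sq_nonneg x),
      mul_nonneg (mul_nonneg hn.le (sub_pos.mpr hlt).le) (sq_nonneg y)]
  · exact he
  · exfalso
    nlinarith [mul_nonneg (mul_nonneg hn.le (sub_pos.mpr hgt).le) (sq_nonneg (x+y)),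
      mul_nonneg (mul_nonneg hn.le (sub_pos.mpr hgt).le) (sq_nonneg x),
      mul_nonneg (mul_nonneg hn.le (sub_pos.mpr hgt).le) (sq_nonneg y)]

noncomputable def gAux (c t k γ β : ℝ) (δ : ℝ) : ℝ :=
  (t / (2*(γ+δ)*k*(β+δ)^2) +
    Real.sqrt ((t / (2*(γ+δ)*k*(β+δ)^2))^2 + (c / (3*k*(β+δ)^2))^3)) ^ ((1:ℝ)/3)
  - (c / (3*k*(β+δ)^2)) /
    ((t / (2*(γ+δ)*k*(β+δ)^2) +
      Real.sqrt ((t / (2*(γ+δ)*k*(β+δ)^2))^2 + (c / (3*k*(β+δ)^2))^3)) ^ ((1:ℝ)/3))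

lemma gAux_spec (c t k γ β δ : ℝ) (hc : 0 < c) (ht : 0 < t) (hk : 0 < k)
    (hγδ : 0 < γ + δ) (hβδ : 0 < β + δ) :
    0 < gAux c t k γ β δ ∧
    (γ+δ)*c*(gAux c t k γ β δ) + (γ+δ)*k*(β+δ)^2*(gAux c t k γ β δ)^3 = t := by
  have hA : 0 < t / (2*(γ+δ)*k*(β+δ)^2) := by positivity
  have hB : 0 < c / (3*k*(β+δ)^2) := by positivity
  have hT : 0 < t / (2*(γ+δ)*k*(β+δ)^2) +
      Real.sqrt ((t / (2*(γ+δ)*k*(β+δ)^2))^2 + (c / (3*k*(β+δ)^2))^3) := by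
    positivity
  obtain ⟨hu, hu3⟩ := cube_root_cube hT
  obtain ⟨hpos, heq⟩ := cardano _ _ _ hA hB hu hu3
  have hg : gAux c t k γ β δ =
      (t / (2*(γ+δ)*k*(β+δ)^2) +
        Real.sqrt ((t / (2*(γ+δ)*k*(β+δ)^2))^2 + (c / (3*k*(β+δ)^2))^3)) ^ ((1:ℝ)/3)
      - (c / (3*k*(β+δ)^2)) /
        ((t / (2*(γ+δ)*k*(β+δ)^2) +
          Real.sqrt ((t / (2*(γ+δ)*k*(β+δ)^2))^2 + (c / (3*k*(β+δ)^2))^3)) ^ ((1:ℝ)/3)) := rfl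
  rw [hg]
  refine ⟨hpos, ?_⟩
  have hk1 : k ≠ 0 := hk.ne'
  have hb1 : β + δ ≠ 0 := hβδ.ne'
  have hg1 : γ + δ ≠ 0 := hγδ.ne'
  have h1 : 3*(c/(3*k*(β+δ)^2)) * ((γ+δ)*k*(β+δ)^2) = (γ+δ)*c := by
    field_simp
  have h2 : 2*(t/(2*(γ+δ)*k*(β+δ)^2)) * ((γ+δ)*k*(β+δ)^2) = t := by
    field_simp
  linear_combination ((γ+δ)*k*(β+δ)^2) * heq -
    ((t / (2*(γ+δ)*k*(β+δ)^2) +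
      Real.sqrt ((t / (2*(γ+δ)*k*(β+δ)^2))^2 + (c / (3*k*(β+δ)^2))^3)) ^ ((1:ℝ)/3)
    - (c / (3*k*(β+δ)^2)) /
      ((t / (2*(γ+δ)*k*(β+δ)^2) +
        Real.sqrt ((t / (2*(γ+δ)*k*(β+δ)^2))^2 + (c / (3*k*(β+δ)^2))^3)) ^ ((1:ℝ)/3))) * h1
    + h2

lemma gAux_diff (c t k γ β δ : ℝ) (hc : 0 < c) (ht : 0 < t) (hk : 0 < k)
    (hγδ : 0 < γ + δ) (hβδ : 0 < β + δ) :
    DifferentiableAt ℝ (gAux c t k γ β) δ := by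
  have hA : DifferentiableAt ℝ (fun δ => t/(2*(γ+δ)*k*(β+δ)^2)) δ :=
    (differentiableAt_const t).div (by fun_prop) (by positivity)
  have hB : DifferentiableAt ℝ (fun δ => c/(3*k*(β+δ)^2)) δ :=
    (differentiableAt_const c).div (by fun_prop) (by positivity)
  have hin : DifferentiableAt ℝ
      (fun δ => (t/(2*(γ+δ)*k*(β+δ)^2))^2 + (c/(3*k*(β+δ)^2))^3) δ :=
    (hA.pow 2).add (hB.pow 3)
  have hinpos : (0:ℝ) < (t/(2*(γ+δ)*k*(β+δ)^2))^2 + (c/(3*k*(β+δ)^2))^3 := by positivity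
  have hs : DifferentiableAt ℝ
      (fun δ => Real.sqrt ((t/(2*(γ+δ)*k*(β+δ)^2))^2 + (c/(3*k*(β+δ)^2))^3)) δ :=
    hin.sqrt hinpos.ne'
  have hT := hA.add hs
  have hTpos : (0:ℝ) < t/(2*(γ+δ)*k*(β+δ)^2) +
      Real.sqrt ((t/(2*(γ+δ)*k*(β+δ)^2))^2 + (c/(3*k*(β+δ)^2))^3) := by positivity
  have hu : DifferentiableAt ℝ (fun δ => (t/(2*(γ+δ)*k*(β+δ)^2) +
      Real.sqrt ((t/(2*(γ+δ)*k*(β+δ)^2))^2 + (c/(3*k*(β+δ)^2))^3)) ^ ((1:ℝ)/3)) δ :=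
    hT.rpow_const (Or.inl hTpos.ne')
  have hupos : (0:ℝ) < (t/(2*(γ+δ)*k*(β+δ)^2) +
      Real.sqrt ((t/(2*(γ+δ)*k*(β+δ)^2))^2 + (c/(3*k*(β+δ)^2))^3)) ^ ((1:ℝ)/3) :=
    Real.rpow_pos_of_pos hTpos _
  exact hu.sub (hB.div hu hupos.ne')

lemma main_aux (γ β τ₀ τε τS θ : ℝ)
    (hγ : 0 < γ) (hβ : 0 < β) (hτ₀ : 0 < τ₀) (hτε : 0 < τε) (hτS : 0 < τS)
    (hθ : -1 < θ)
    (a : ℝ → ℝ)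
    (ha : ∀ δ : ℝ, -γ < δ → 0 < β + δ → 0 < a δ ∧
      (γ + δ) * a δ = τε / (τε + τ₀ + (a δ) ^ 2 * (θ + 1) ^ 2 * (β + δ) ^ 2 * τS))
    (δ₀ : ℝ) (h1 : -γ < δ₀) (h2 : 0 < β + δ₀) :
    HasDerivAt (fun d => a d * (θ + 1))
        (-(a δ₀ * (θ + 1) *
            ((a δ₀ * (θ + 1)) ^ 2 * (β + δ₀) * τS * (β + 2 * (γ + δ₀) + δ₀) + τ₀ + τε) /
          ((γ + δ₀) * (3 * (a δ₀ * (θ + 1)) ^ 2 * (β + δ₀) ^ 2 * τS + τ₀ + τε)))) δ₀ ∧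
      -(a δ₀ * (θ + 1) *
            ((a δ₀ * (θ + 1)) ^ 2 * (β + δ₀) * τS * (β + 2 * (γ + δ₀) + δ₀) + τ₀ + τε) /
          ((γ + δ₀) * (3 * (a δ₀ * (θ + 1)) ^ 2 * (β + δ₀) ^ 2 * τS + τ₀ + τε))) < 0 := by
  have hθ1 : 0 < θ + 1 := by linarith
  have hK : 0 < (θ+1)^2*τS := mul_pos (pow_pos hθ1 2) hτS
  -- cubic form of the fixed-point equation
  have hacube : ∀ δ : ℝ, -γ < δ → 0 < β + δ →
      (γ+δ)*((τε+τ₀)*(a δ) + (θ+1)^2*τS*(β+δ)^2*(a δ)^3) = τε := by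
    intro δ hδ1 hδ2
    obtain ⟨hap, hae⟩ := ha δ hδ1 hδ2
    have hD : 0 < τε + τ₀ + (a δ) ^ 2 * (θ + 1) ^ 2 * (β + δ) ^ 2 * τS := by positivity
    rw [eq_div_iff hD.ne'] at hae
    linear_combination hae
  -- a coincides with the explicit Cardano solution on the domain
  have hag : ∀ δ : ℝ, -γ < δ → 0 < β + δ → a δ = gAux (τε+τ₀) τε ((θ+1)^2*τS) γ β δ := by
    intro δ hδ1 hδ2
    have hγδ : 0 < γ + δ := by linarith
    obtain ⟨hgp, hge⟩ := gAux_spec (τε+τ₀) τε ((θ+1)^2*τS) γ β δ (by positivity) hτε hK hγδ hδ2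
    refine cubic_inj (m := (γ+δ)*(τε+τ₀)) (n := (γ+δ)*((θ+1)^2*τS)*(β+δ)^2)
      (by positivity) (by positivity) ?_
    linear_combination hacube δ hδ1 hδ2 - hge
  set g := gAux (τε+τ₀) τε ((θ+1)^2*τS) γ β with hgdef
  have hγδ₀ : 0 < γ + δ₀ := by linarith
  have hSopen : IsOpen {δ : ℝ | -γ < δ ∧ 0 < β + δ} :=
    (isOpen_lt continuous_const continuous_id).inter
      (isOpen_lt continuous_const (continuous_const.add continuous_id))
  have hmem : {δ : ℝ | -γ < δ ∧ 0 < β + δ} ∈ nhds δ₀ := hSopen.mem_nhds ⟨h1, h2⟩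
  have hev : a =ᶠ[nhds δ₀] g :=
    Filter.eventually_of_mem hmem (fun δ hδ => hag δ hδ.1 hδ.2)
  have hgd : DifferentiableAt ℝ g δ₀ :=
    gAux_diff (τε+τ₀) τε ((θ+1)^2*τS) γ β δ₀ (by positivity) hτε hK hγδ₀ h2
  obtain ⟨dv, hgd'⟩ : ∃ dv, HasDerivAt g dv δ₀ := ⟨_, hgd.hasDerivAt⟩
  have had : HasDerivAt a dv δ₀ := hgd'.congr_of_eventuallyEq hev
  -- derivative of the constraint function
  have hγδd : HasDerivAt (fun δ : ℝ => γ + δ) 1 δ₀ := by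
    simpa using (hasDerivAt_id δ₀).const_add γ
  have hβδd : HasDerivAt (fun δ : ℝ => β + δ) 1 δ₀ := by
    simpa using (hasDerivAt_id δ₀).const_add β
  have hF := hγδd.mul ((had.const_mul (τε+τ₀)).add
    ((((hβδd.pow 2)).const_mul ((θ+1)^2*τS)).mul (had.pow 3)))
  have h0 : HasDerivAt (fun δ : ℝ => (γ+δ)*((τε+τ₀)*(a δ) + (θ+1)^2*τS*(β+δ)^2*(a δ)^3))
      0 δ₀ := by
    refine (hasDerivAt_const δ₀ τε).congr_of_eventuallyEq ?_
    exact Filter.eventually_of_mem hmem (fun δ hδ => hacube δ hδ.1 hδ.2)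
  have hE := hF.unique h0
  have hd : (γ+δ₀)*((τε+τ₀) + 3*(θ+1)^2*τS*(β+δ₀)^2*(a δ₀)^2)*dv =
      -((τε+τ₀)*(a δ₀) + (θ+1)^2*τS*(β+δ₀)*(β+δ₀+2*(γ+δ₀))*(a δ₀)^3) := by
    simp only [Pi.add_apply, Pi.mul_apply, Pi.pow_apply] at hE
    linear_combination hE
  have hap : 0 < a δ₀ := (ha δ₀ h1 h2).1
  have hDen : 0 < (γ + δ₀) * (3 * (a δ₀ * (θ + 1)) ^ 2 * (β + δ₀) ^ 2 * τS + τ₀ + τε) := by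
    positivity
  have hNum : 0 < a δ₀ * (θ + 1) *
      ((a δ₀ * (θ + 1)) ^ 2 * (β + δ₀) * τS * (β + 2 * (γ + δ₀) + δ₀) + τ₀ + τε) := by
    have hb2 : 0 < β + 2 * (γ + δ₀) + δ₀ := by linarith
    positivity
  have hT : dv * (θ + 1) =
      -(a δ₀ * (θ + 1) *
          ((a δ₀ * (θ + 1)) ^ 2 * (β + δ₀) * τS * (β + 2 * (γ + δ₀) + δ₀) + τ₀ + τε) /
        ((γ + δ₀) * (3 * (a δ₀ * (θ + 1)) ^ 2 * (β + δ₀) ^ 2 * τS + τ₀ + τε))) := by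
    rw [neg_div' , eq_div_iff hDen.ne']
    linear_combination (θ+1) * hd
  refine ⟨hT ▸ had.mul_const (θ+1), ?_⟩
  exact neg_lt_zero.mpr (div_pos hNum hDen)


/-- In the taxed equilibrium (tax δ on all traders), the loading on private
information α(δ) = a(δ)(θ+1) has the stated negative derivative in δ, so α is
strictly decreasing in the tax. -/
theorem taxed_loading_decreasing
    (γ β τ₀ τε τS θ : ℝ)
    (hγ : 0 < γ) (hβ : 0 < β) (hτ₀ : 0 < τ₀) (hτε : 0 < τε) (hτS : 0 < τS)
    (hθ : -1 < θ)
    (a : ℝ → ℝ)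
    (ha : ∀ δ : ℝ, -γ < δ → 0 < β + δ → 0 < a δ ∧
      (γ + δ) * a δ = τε / (τε + τ₀ + (a δ) ^ 2 * (θ + 1) ^ 2 * (β + δ) ^ 2 * τS)) :
    (∀ δ : ℝ, -γ < δ → 0 < β + δ →
      HasDerivAt (fun d => a d * (θ + 1))
        (-(a δ * (θ + 1) *
            ((a δ * (θ + 1)) ^ 2 * (β + δ) * τS * (β + 2 * (γ + δ) + δ) + τ₀ + τε) /
          ((γ + δ) * (3 * (a δ * (θ + 1)) ^ 2 * (β + δ) ^ 2 * τS + τ₀ + τε)))) δ ∧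
      -(a δ * (θ + 1) *
            ((a δ * (θ + 1)) ^ 2 * (β + δ) * τS * (β + 2 * (γ + δ) + δ) + τ₀ + τε) /
          ((γ + δ) * (3 * (a δ * (θ + 1)) ^ 2 * (β + δ) ^ 2 * τS + τ₀ + τε))) < 0) ∧
    StrictAntiOn (fun δ => a δ * (θ + 1)) {δ : ℝ | -γ < δ ∧ 0 < β + δ} := by
  have key := main_aux γ β τ₀ τε τS θ hγ hβ hτ₀ hτε hτS hθ a ha
  refine ⟨fun δ h1 h2 => key δ h1 h2, ?_⟩
  have hSopen : IsOpen {δ : ℝ | -γ < δ ∧ 0 < β + δ} :=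
    (isOpen_lt continuous_const continuous_id).inter
      (isOpen_lt continuous_const (continuous_const.add continuous_id))
  have hconv : Convex ℝ {δ : ℝ | -γ < δ ∧ 0 < β + δ} := by
    have : {δ : ℝ | -γ < δ ∧ 0 < β + δ} = Ioi (-γ) ∩ Ioi (-β) := by
      ext x; simp only [mem_setOf_eq, mem_inter_iff, mem_Ioi]
      constructor <;> rintro ⟨u, v⟩ <;> exact ⟨u, by linarith⟩
    rw [this]
    exact (convex_Ioi _).inter (convex_Ioi _)
  refine strictAntiOn_of_deriv_neg hconv ?_ ?_
  · exact fun x hx => ((key x hx.1 hx.2).1.differentiableAt.continuousAt).continuousWithinAt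
  · intro x hx
    rw [hSopen.interior_eq] at hx
    rw [(key x hx.1 hx.2).1.deriv]
    exact (key x hx.1 hx.2).2
end

section
/- In the taxed equilibrium where the tax affects only informed traders, the loading on public information η(δ) = (θ+1)/(γ+δ) - α(δ) is strictly decreasing in δ, where α(δ) = a(δ)(θ+1) and a(δ) solves (γ+δ)a = τ_ε/(τ_ε + τ₀ + a²(θ+1)²β²τ_S). -/
open Set

/-- When the tax affects only informed traders (so the supply slope β and public
precision are unchanged), the loading on public information
η(δ) = (θ+1)/(γ+δ) - α(δ) is strictly decreasing in δ. -/
theorem public_loading_decreasing_in_tax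
    (γ β τ₀ τε τS θ : ℝ)
    (hγ : 0 < γ) (hβ : 0 < β) (hτ₀ : 0 < τ₀) (hτε : 0 < τε) (hτS : 0 < τS)
    (hθ : -1 < θ)
    (a : ℝ → ℝ)
    (ha : ∀ δ : ℝ, -γ < δ → 0 < a δ ∧
      (γ + δ) * a δ = τε / (τε + τ₀ + (a δ) ^ 2 * (θ + 1) ^ 2 * β ^ 2 * τS)) :
    StrictAntiOn (fun δ => (θ + 1) / (γ + δ) - a δ * (θ + 1)) (Set.Ioi (-γ)) := by
  intro δ₁ h₁ δ₂ h₂ hlt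
  simp only [Set.mem_Ioi] at h₁ h₂
  obtain ⟨hp₁, he₁⟩ := ha δ₁ h₁
  obtain ⟨hp₂, he₂⟩ := ha δ₂ h₂
  have hθ1 : 0 < θ + 1 := by linarith
  have hc : 0 < (θ + 1) ^ 2 * β ^ 2 * τS := by positivity
  have hx₁ : 0 < γ + δ₁ := by linarith
  have hx₂ : 0 < γ + δ₂ := by linarith
  have hD₁ : 0 < τε + τ₀ + (a δ₁) ^ 2 * (θ + 1) ^ 2 * β ^ 2 * τS := by positivity
  have hD₂ : 0 < τε + τ₀ + (a δ₂) ^ 2 * (θ + 1) ^ 2 * β ^ 2 * τS := by positivity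
  have E₁ : (γ + δ₁) * a δ₁ * (τε + τ₀ + (a δ₁) ^ 2 * (θ + 1) ^ 2 * β ^ 2 * τS) = τε := by
    rw [he₁]; field_simp
  have E₂ : (γ + δ₂) * a δ₂ * (τε + τ₀ + (a δ₂) ^ 2 * (θ + 1) ^ 2 * β ^ 2 * τS) = τε := by
    rw [he₂]; field_simp
  -- a is strictly decreasing
  have hao : a δ₂ < a δ₁ := by
    by_contra h
    push_neg at h
    have hDle : τε + τ₀ + (a δ₁) ^ 2 * (θ + 1) ^ 2 * β ^ 2 * τS
        ≤ τε + τ₀ + (a δ₂) ^ 2 * (θ + 1) ^ 2 * β ^ 2 * τS := by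
      nlinarith [mul_nonneg (mul_nonneg (sub_nonneg.mpr h) (by linarith : (0:ℝ) ≤ a δ₁ + a δ₂)) hc.le]
    have h1 : (γ + δ₁) * a δ₁ < (γ + δ₂) * a δ₂ := by nlinarith
    have h2 : (γ + δ₁) * a δ₁ * (τε + τ₀ + (a δ₁) ^ 2 * (θ + 1) ^ 2 * β ^ 2 * τS)
        < (γ + δ₂) * a δ₂ * (τε + τ₀ + (a δ₂) ^ 2 * (θ + 1) ^ 2 * β ^ 2 * τS) := by
      calc (γ + δ₁) * a δ₁ * (τε + τ₀ + (a δ₁) ^ 2 * (θ + 1) ^ 2 * β ^ 2 * τS)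
          < (γ + δ₂) * a δ₂ * (τε + τ₀ + (a δ₁) ^ 2 * (θ + 1) ^ 2 * β ^ 2 * τS) :=
            mul_lt_mul_of_pos_right h1 hD₁
        _ ≤ (γ + δ₂) * a δ₂ * (τε + τ₀ + (a δ₂) ^ 2 * (θ + 1) ^ 2 * β ^ 2 * τS) :=
            mul_le_mul_of_nonneg_left hDle (le_of_lt (mul_pos hx₂ hp₂))
    linarith [E₁, E₂]
  have g₁ : (θ + 1) / (γ + δ₁) - a δ₁ * (θ + 1)
      = (θ + 1) * (a δ₁ * (τ₀ + (a δ₁) ^ 2 * (θ + 1) ^ 2 * β ^ 2 * τS)) / τε := by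
    field_simp
    linear_combination (-1) * E₁
  have g₂ : (θ + 1) / (γ + δ₂) - a δ₂ * (θ + 1)
      = (θ + 1) * (a δ₂ * (τ₀ + (a δ₂) ^ 2 * (θ + 1) ^ 2 * β ^ 2 * τS)) / τε := by
    field_simp
    linear_combination (-1) * E₂
  simp only
  rw [g₁, g₂]
  have hcube : (a δ₂) ^ 3 < (a δ₁) ^ 3 := by
    exact pow_lt_pow_left₀ hao hp₂.le (by norm_num)
  have inner : a δ₂ * (τ₀ + (a δ₂) ^ 2 * (θ + 1) ^ 2 * β ^ 2 * τS)
      < a δ₁ * (τ₀ + (a δ₁) ^ 2 * (θ + 1) ^ 2 * β ^ 2 * τS) := by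
    nlinarith [mul_pos (sub_pos.mpr hao) hτ₀, mul_pos (sub_pos.mpr hcube) hc]
  have key := mul_lt_mul_of_pos_left inner hθ1
  exact div_lt_div_of_pos_right key hτε
end
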